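/- Monotonicity of trimming bounds: for a continuous real random variable Y with quantile function F⁻¹, the lower-tail trimmed mean δ ↦ E[Y | Y < F⁻¹(δ)] is nondecreasing in δ on (0,1), and the upper-tail trimmed mean δ ↦ E[Y | Y > F⁻¹(1−δ)] is nonincreasing in δ on (0,1). Consequently, if 0 < δ̄ ≤ δ, the bounds computed at δ̄ contain the bounds computed at δ. -/

import Mathlib

open MeasureTheory Set

/-- Conditional mean of `Y` on the event `A`. -/
noncomputable def condMean {Ω : Type*} [MeasurableSpace Ω] (μ : Measure Ω)
    (Y : Ω → ℝ) (A : Set Ω) : ℝ :=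
  (∫ ω in A, Y ω ∂μ) / (μ A).toReal

/-- Quantile function `F⁻¹(u) = inf {y : P(Y ≤ y) ≥ u}`. -/
noncomputable def quantileFn {Ω : Type*} [MeasurableSpace Ω] (μ : Measure Ω)
    (Y : Ω → ℝ) (u : ℝ) : ℝ :=
  sInf {y : ℝ | u ≤ (μ {ω | Y ω ≤ y}).toReal}

/-- Lower-tail trimmed mean `E[Y | Y < F⁻¹(δ)]`. -/
noncomputable def lowerTrim {Ω : Type*} [MeasurableSpace Ω] (μ : Measure Ω)
    (Y : Ω → ℝ) (δ : ℝ) : ℝ :=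
  condMean μ Y {ω | Y ω < quantileFn μ Y δ}

/-- Upper-tail trimmed mean `E[Y | Y > F⁻¹(1−δ)]`. -/
noncomputable def upperTrim {Ω : Type*} [MeasurableSpace Ω] (μ : Measure Ω)
    (Y : Ω → ℝ) (δ : ℝ) : ℝ :=
  condMean μ Y {ω | quantileFn μ Y (1 - δ) < Y ω}

open Filter ProbabilityTheory
open scoped Topology ENNReal

set_option linter.unusedSectionVars false

section QAux
variable {ν : Measure ℝ} [IsProbabilityMeasure ν] [NullSingletonClass ν] {δ : ℝ}

lemma qaux_nonempty (h1 : δ < 1) : {y : ℝ | δ ≤ cdf ν y}.Nonempty := by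
  have := (tendsto_cdf_atTop ν).eventually (eventually_gt_nhds h1)
  obtain ⟨y, hy⟩ := this.exists
  exact ⟨y, hy.le⟩

lemma qaux_bddBelow (h0 : 0 < δ) : BddBelow {y : ℝ | δ ≤ cdf ν y} := by
  have := (tendsto_cdf_atBot ν).eventually (eventually_lt_nhds h0)
  obtain ⟨y₀, hy₀⟩ := this.exists
  refine ⟨y₀, fun z hz => ?_⟩
  by_contra h
  push_neg at h
  exact absurd (le_trans hz (monotone_cdf ν h.le)) (not_le.2 hy₀)

lemma qaux_leftLim (x : ℝ) : Function.leftLim (cdf ν) x = cdf ν x := by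
  have h := StieltjesFunction.measure_singleton (cdf ν) x
  rw [measure_cdf ν, measure_singleton] at h
  have h2 : cdf ν x - Function.leftLim (cdf ν) x ≤ 0 := by
    by_contra hc
    push_neg at hc
    rw [eq_comm, ENNReal.ofReal_eq_zero] at h
    linarith
  have h3 := (monotone_cdf ν).leftLim_le (le_refl x)
  linarith

lemma qaux_cdf_sInf (h0 : 0 < δ) (h1 : δ < 1) :
    cdf ν (sInf {y : ℝ | δ ≤ cdf ν y}) = δ := by
  set S := {y : ℝ | δ ≤ cdf ν y} with hS
  set q := sInf S with hq
  have hne := qaux_nonempty (ν := ν) h1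
  have hbd := qaux_bddBelow (ν := ν) h0
  have hge : δ ≤ cdf ν q := by
    have : δ ≤ ⨅ r : Ioi q, cdf ν r := by
      refine le_ciInf fun ⟨r, hr⟩ => ?_
      obtain ⟨s, hsS, hsr⟩ := exists_lt_of_csInf_lt hne hr
      exact le_trans hsS (monotone_cdf ν hsr.le)
    rwa [StieltjesFunction.iInf_Ioi_eq] at this
  have hle : cdf ν q ≤ δ := by
    rw [← qaux_leftLim q]
    refine le_of_tendsto ((monotone_cdf ν).tendsto_leftLim q) ?_
    filter_upwards [self_mem_nhdsWithin] with y (hy : y < q)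
    by_contra h
    push_neg at h
    exact absurd (csInf_le hbd h.le) (not_le.2 hy)
  linarith

lemma qaux_measure_Iio (h0 : 0 < δ) (h1 : δ < 1) :
    ν (Iio (sInf {y : ℝ | δ ≤ cdf ν y})) = ENNReal.ofReal δ := by
  rw [measure_congr (Iio_ae_eq_Iic (μ := ν) (a := sInf {y : ℝ | δ ≤ cdf ν y})),
    ← ofReal_cdf, qaux_cdf_sInf h0 h1]

lemma qaux_measure_Ioi (h0 : 0 < δ) (h1 : δ < 1) :
    ν (Ioi (sInf {y : ℝ | (1 - δ) ≤ cdf ν y})) = ENNReal.ofReal δ := by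
  have h0' : 0 < 1 - δ := by linarith
  have h1' : 1 - δ < 1 := by linarith
  have hcdf := qaux_cdf_sInf (ν := ν) h0' h1'
  rw [← compl_Iic (a := sInf {y : ℝ | (1 - δ) ≤ cdf ν y}), measure_compl measurableSet_Iic
    (measure_ne_top ν _), ← ofReal_cdf, hcdf, measure_univ]
  rw [← ENNReal.ofReal_one, ← ENNReal.ofReal_sub _ (by linarith)]
  norm_num

lemma qaux_mono {δ₁ δ₂ : ℝ} (h0 : 0 < δ₁) (h12 : δ₁ ≤ δ₂) (h1 : δ₂ < 1) :
    sInf {y : ℝ | δ₁ ≤ cdf ν y} ≤ sInf {y : ℝ | δ₂ ≤ cdf ν y} := by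
  refine csInf_le_csInf (qaux_bddBelow h0) (qaux_nonempty h1) fun y hy => le_trans h12 hy

end QAux

section Core

/-- Core arithmetic inequality for trimmed means. -/
lemma core_ineq {Ω : Type*} [MeasurableSpace Ω] (μ : Measure Ω) [IsFiniteMeasure μ]
    (Y : Ω → ℝ) (hYi : Integrable Y μ)
    {A B : Set Ω} (hA : MeasurableSet A) (hB : MeasurableSet B) (hAB : A ⊆ B)
    {δ₁ δ₂ c : ℝ} (h1 : 0 < δ₁) (h12 : δ₁ ≤ δ₂)
    (hmA : μ A = ENNReal.ofReal δ₁) (hmB : μ B = ENNReal.ofReal δ₂)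
    (hYA : ∀ ω ∈ A, Y ω ≤ c) (hYBA : ∀ ω ∈ B \ A, c ≤ Y ω) :
    (∫ ω in A, Y ω ∂μ) / δ₁ ≤ (∫ ω in B, Y ω ∂μ) / δ₂ := by
  have h2 : 0 < δ₂ := lt_of_lt_of_le h1 h12
  have hmBA : μ (B \ A) = ENNReal.ofReal (δ₂ - δ₁) := by
    rw [measure_diff hAB hA.nullMeasurableSet (by rw [hmA]; exact ENNReal.ofReal_ne_top),
      hmA, hmB, ← ENNReal.ofReal_sub _ h1.le]
  set I₁ := ∫ ω in A, Y ω ∂μ with hI₁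
  set J := ∫ ω in B \ A, Y ω ∂μ with hJ
  have hsplit : ∫ ω in B, Y ω ∂μ = I₁ + J := by
    rw [hI₁, hJ, ← setIntegral_union disjoint_sdiff_self_right (hB.diff hA)
      hYi.integrableOn hYi.integrableOn, union_diff_cancel hAB]
  have hI₁le : I₁ ≤ c * δ₁ := by
    calc I₁ ≤ ∫ _ω in A, c ∂μ := by
          refine setIntegral_mono_on hYi.integrableOn (integrableOn_const ?_) hA hYA
          rw [hmA]; exact ENNReal.ofReal_ne_top
      _ = c * δ₁ := by
          rw [setIntegral_const, measureReal_def, hmA, ENNReal.toReal_ofReal h1.le, smul_eq_mul, mul_comm]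
  have hJge : c * (δ₂ - δ₁) ≤ J := by
    calc c * (δ₂ - δ₁) = ∫ _ω in B \ A, c ∂μ := by
          rw [setIntegral_const, measureReal_def, hmBA, ENNReal.toReal_ofReal (by linarith), smul_eq_mul, mul_comm]
      _ ≤ J := by
          refine setIntegral_mono_on (integrableOn_const ?_) hYi.integrableOn
            (hB.diff hA) hYBA
          rw [hmBA]; exact ENNReal.ofReal_ne_top
  rw [hsplit, div_le_div_iff₀ h1 h2]
  nlinarith [mul_le_mul_of_nonneg_left hI₁le (by linarith : (0:ℝ) ≤ δ₂ - δ₁)]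

end Core


/-- Monotonicity of the trimming bounds: the lower-tail trimmed mean is nondecreasing
in `δ` on `(0,1)`, the upper-tail trimmed mean is nonincreasing in `δ` on `(0,1)`, and
consequently the interval of bounds computed at `δ̄ ≤ δ` contains the one computed at `δ`. -/
theorem trimmed_mean_monotonicity
    {Ω : Type*} [MeasurableSpace Ω] (μ : Measure Ω) [IsProbabilityMeasure μ]
    (Y : Ω → ℝ) (hYm : Measurable Y) (hYi : Integrable Y μ)
    (hcont : ∀ y : ℝ, μ {ω | Y ω = y} = 0) :
    (∀ δ₁ δ₂ : ℝ, 0 < δ₁ → δ₁ ≤ δ₂ → δ₂ < 1 →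
        lowerTrim μ Y δ₁ ≤ lowerTrim μ Y δ₂) ∧
    (∀ δ₁ δ₂ : ℝ, 0 < δ₁ → δ₁ ≤ δ₂ → δ₂ < 1 →
        upperTrim μ Y δ₂ ≤ upperTrim μ Y δ₁) ∧
    (∀ δbar δ : ℝ, 0 < δbar → δbar ≤ δ → δ < 1 →
        Set.Icc (lowerTrim μ Y δ) (upperTrim μ Y δ) ⊆
          Set.Icc (lowerTrim μ Y δbar) (upperTrim μ Y δbar)) := by
  set ν := μ.map Y with hν
  have hprob : IsProbabilityMeasure ν := Measure.isProbabilityMeasure_map hYm.aemeasurable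
  have hna : NullSingletonClass ν := ⟨fun y => by
    rw [hν, Measure.map_apply hYm (measurableSet_singleton y)]
    exact hcont y⟩
  have hcdf : ∀ y : ℝ, (μ {ω | Y ω ≤ y}).toReal = cdf ν y := fun y => by
    rw [cdf_eq_real, measureReal_def, hν, Measure.map_apply hYm measurableSet_Iic]
    rfl
  have hqeq : ∀ u : ℝ, quantileFn μ Y u = sInf {y : ℝ | u ≤ cdf ν y} := fun u => by
    unfold quantileFn
    congr 1
    ext y
    simp only [mem_setOf_eq, hcdf y]
  have hlow : ∀ δ : ℝ, 0 < δ → δ < 1 →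
      μ {ω | Y ω < quantileFn μ Y δ} = ENNReal.ofReal δ := fun δ h0 h1 => by
    rw [hqeq]
    have h := qaux_measure_Iio (ν := ν) h0 h1
    rw [hν, Measure.map_apply hYm measurableSet_Iio] at h
    exact h
  have hupp : ∀ δ : ℝ, 0 < δ → δ < 1 →
      μ {ω | quantileFn μ Y (1 - δ) < Y ω} = ENNReal.ofReal δ := fun δ h0 h1 => by
    rw [hqeq]
    have h := qaux_measure_Ioi (ν := ν) h0 h1
    rw [hν, Measure.map_apply hYm measurableSet_Ioi] at h
    exact h
  have Hlow : ∀ δ₁ δ₂ : ℝ, 0 < δ₁ → δ₁ ≤ δ₂ → δ₂ < 1 →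
      lowerTrim μ Y δ₁ ≤ lowerTrim μ Y δ₂ := by
    intro δ₁ δ₂ h0 h12 h1
    have h01 : δ₁ < 1 := lt_of_le_of_lt h12 h1
    have h02 : 0 < δ₂ := lt_of_lt_of_le h0 h12
    have hq12 : quantileFn μ Y δ₁ ≤ quantileFn μ Y δ₂ := by
      rw [hqeq, hqeq]; exact qaux_mono h0 h12 h1
    have hmA := hlow δ₁ h0 h01
    have hmB := hlow δ₂ h02 h1
    unfold lowerTrim condMean
    rw [hmA, hmB, ENNReal.toReal_ofReal h0.le, ENNReal.toReal_ofReal h02.le]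
    exact core_ineq μ Y hYi (measurableSet_lt hYm measurable_const)
      (measurableSet_lt hYm measurable_const)
      (fun ω hω => lt_of_lt_of_le hω hq12) h0 h12 hmA hmB
      (fun ω hω => le_of_lt hω) (fun ω hω => le_of_not_gt hω.2)
  have Hupp : ∀ δ₁ δ₂ : ℝ, 0 < δ₁ → δ₁ ≤ δ₂ → δ₂ < 1 →
      upperTrim μ Y δ₂ ≤ upperTrim μ Y δ₁ := by
    intro δ₁ δ₂ h0 h12 h1
    have h01 : δ₁ < 1 := lt_of_le_of_lt h12 h1
    have h02 : 0 < δ₂ := lt_of_lt_of_le h0 h12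
    have hq12 : quantileFn μ Y (1 - δ₂) ≤ quantileFn μ Y (1 - δ₁) := by
      rw [hqeq, hqeq]
      exact qaux_mono (by linarith) (by linarith) (by linarith)
    have hmA := hupp δ₁ h0 h01
    have hmB := hupp δ₂ h02 h1
    unfold upperTrim condMean
    rw [hmA, hmB, ENNReal.toReal_ofReal h0.le, ENNReal.toReal_ofReal h02.le]
    have key := core_ineq (c := -(quantileFn μ Y (1 - δ₁))) μ (fun ω => -Y ω) hYi.neg
      (measurableSet_lt measurable_const hYm)
      (measurableSet_lt measurable_const hYm)
      (fun ω hω => lt_of_le_of_lt hq12 hω) h0 h12 hmA hmB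
      (fun ω hω => by simp only [neg_le_neg_iff]; exact le_of_lt hω)
      (fun ω hω => by simp only [neg_le_neg_iff]; exact le_of_not_gt hω.2)
    rw [integral_neg, integral_neg, neg_div, neg_div, neg_le_neg_iff] at key
    exact key
  refine ⟨Hlow, Hupp, fun δbar δ h0 h12 h1 => ?_⟩
  exact Set.Icc_subset_Icc (Hlow δbar δ h0 h12 h1) (Hupp δbar δ h0 h12 h1)
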